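/- Let V be a vector space over the field 𝔽₂ = ℤ/2ℤ and let D : V → V be a locally nilpotent linear endomorphism, i.e. for every v ∈ V there exists n with Dⁿ v = 0. Then the linear operator T on the space of finitely supported functions p : ℕ → V, defined by (T p)(n) = p(n+1) + D(p(n)), is surjective. -/

import Mathlib

/-- Lemma 8.5 ('surgettiva'): for a locally nilpotent endomorphism `D` of an
`𝔽₂`-vector space `V`, the operator `T` on finitely supported functions `ℕ → V`
given by `(T p)(n) = p(n+1) + D(p(n))` is surjective. -/
theorem shift_plus_nilpotent_surjective
    (V : Type*) [AddCommGroup V] [Module (ZMod 2) V]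
    (D : V →ₗ[ZMod 2] V) (hD : ∀ v : V, ∃ n : ℕ, (D ^ n) v = 0)
    (T : (ℕ →₀ V) →ₗ[ZMod 2] (ℕ →₀ V))
    (hT : ∀ (p : ℕ →₀ V) (n : ℕ), (T p) n = p (n + 1) + D (p n)) :
    Function.Surjective T := by
  intro q
  induction q using Finsupp.induction_linear with
  | zero => exact ⟨0, by simp⟩
  | add p q hp hq =>
      obtain ⟨a, ha⟩ := hp
      obtain ⟨b, hb⟩ := hq
      exact ⟨a + b, by rw [map_add, ha, hb]⟩
  | single m v =>
      obtain ⟨n, hn⟩ := hD v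
      have hpow : ∀ a : ℕ, n ≤ a → (D ^ a) v = 0 := by
        intro a ha
        rw [← Nat.sub_add_cancel ha, pow_add, Module.End.mul_apply, hn, map_zero]
      set f : ℕ → V := fun j => if m + 1 ≤ j then (D ^ (j - (m + 1))) v else 0 with hf
      have hsupp : ∀ j : ℕ, f j ≠ 0 → j ∈ Finset.range (m + 1 + n) := by
        intro j hj
        by_contra hjr
        apply hj
        simp only [Finset.mem_range, not_lt] at hjr
        have hm1 : m + 1 ≤ j := le_trans (Nat.le_add_right _ _) hjr
        simp only [hf, if_pos hm1]
        exact hpow _ (Nat.le_sub_of_add_le (by omega))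
      refine ⟨Finsupp.onFinset _ f hsupp, ?_⟩
      ext j
      rw [hT]
      simp only [Finsupp.onFinset_apply, Finsupp.single_apply, hf]
      rcases lt_trichotomy j m with h | h | h
      · rw [if_neg (by omega), if_neg (by omega), if_neg (by omega), map_zero, add_zero]
      · subst h
        rw [if_pos (by omega), if_neg (by omega), if_pos rfl, map_zero, add_zero]
        simp
      · rw [if_pos (by omega), if_pos (by omega), if_neg (by omega)]
        have hj1 : j + 1 - (m + 1) = (j - (m + 1)) + 1 := by omega
        have hc : D ((D ^ (j - (m + 1))) v) = (D ^ (j - (m + 1) + 1)) v := by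
          rw [pow_succ', Module.End.mul_apply]
        rw [hj1, hc, ← two_smul (ZMod 2)]
        have h2 : (2 : ZMod 2) = 0 := rfl
        rw [h2, zero_smul]
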